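/- Let X be a closed UPC subset of ℝⁿ with characteristic (m,D): for some M > 0 and every x ∈ X there is a polynomial curve h_x : ℝ → ℝⁿ of degree at most D with h_x(0) = x and dist(h_x(t), ℝⁿ \ X) ≥ M tᵐ for t ∈ [0,1]. Fix x ∈ X, let h = h_x, and let v₂,…,vₙ be unit vectors in ℝⁿ. Define θ(s₁,…,sₙ) = h(s₁) + s₂ᵐ v₂ + ⋯ + sₙᵐ vₙ. Then θ maps the set C = {s ∈ ℝⁿ : 0 ≤ s₁ ≤ 1 and |sᵢ| ≤ (M/(2(n−1)))^{1/m} s₁ for i ≥ 2} into X, and moreover dist(θ(s), ℝⁿ \ X) ≥ (M/2) s₁ᵐ for all s ∈ C. -/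

import Mathlib

open Metric Finset

/-- if `X` is closed, `h` is a polynomial curve of degree ≤ D with
`h(0) = x ∈ X` and `dist(h(t), ℝⁿ \ X) ≥ M tᵐ` on `[0,1]`, and `v₂,…,vₙ` are unit
vectors, then `θ(s) = h(s₁) + s₂ᵐ v₂ + ⋯ + sₙᵐ vₙ` maps the cone
`C = {s : 0 ≤ s₁ ≤ 1, |sᵢ| ≤ (M/(2(n−1)))^{1/m} s₁}` into `X` with
`dist(θ(s), ℝⁿ \ X) ≥ (M/2) s₁ᵐ`. -/
theorem stmt14 {n : ℕ} [NeZero n] (hn : 2 ≤ n) (X : Set (EuclideanSpace ℝ (Fin n)))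
    (hX : IsClosed X)
    (m D : ℕ) (hm : 0 < m) (hD : 0 < D) (M : ℝ) (hM : 0 < M)
    (x : EuclideanSpace ℝ (Fin n)) (hx : x ∈ X)
    (h : ℝ → EuclideanSpace ℝ (Fin n))
    (hpoly : ∃ q : Fin n → Polynomial ℝ, (∀ i, (q i).natDegree ≤ D) ∧
      ∀ t i, h t i = (q i).eval t)
    (h0 : h 0 = x)
    (hdist : ∀ t ∈ Set.Icc (0 : ℝ) 1,
      ENNReal.ofReal (M * t ^ m) ≤ EMetric.infEdist (h t) Xᶜ)
    (v : Fin n → EuclideanSpace ℝ (Fin n)) (hv : ∀ i, i ≠ 0 → ‖v i‖ = 1)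
    (θ : (Fin n → ℝ) → EuclideanSpace ℝ (Fin n))
    (hθ : ∀ s, θ s = h (s 0) + ∑ i ∈ Finset.univ.filter (· ≠ (0 : Fin n)),
      (s i) ^ m • v i) :
    ∀ s : Fin n → ℝ,
      (0 ≤ s 0 ∧ s 0 ≤ 1 ∧ ∀ i, i ≠ 0 →
        |s i| ≤ (M / (2 * (n - 1))) ^ ((1 : ℝ) / m) * s 0) →
      θ s ∈ X ∧ ENNReal.ofReal (M / 2 * (s 0) ^ m) ≤ EMetric.infEdist (θ s) Xᶜ := by
  rintro s ⟨hs0, hs1, hsi⟩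
  have hn1 : (0:ℝ) < (n:ℝ) - 1 := by
    have : (2:ℝ) ≤ n := by exact_mod_cast hn
    linarith
  have hcpos : 0 ≤ M / (2 * ((n:ℝ) - 1)) := by positivity
  have hcm : ((M / (2 * ((n:ℝ) - 1))) ^ ((1 : ℝ) / m)) ^ m = M / (2 * ((n:ℝ) - 1)) := by
    rw [← Real.rpow_natCast ((M / (2 * ((n:ℝ) - 1))) ^ ((1 : ℝ) / m)) m,
      ← Real.rpow_mul hcpos, one_div, inv_mul_cancel₀ (by exact_mod_cast hm.ne'),
      Real.rpow_one]
  -- bound on each term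
  have hterm : ∀ i ∈ Finset.univ.filter (· ≠ (0 : Fin n)),
      ‖(s i) ^ m • v i‖ ≤ M / (2 * ((n:ℝ) - 1)) * (s 0) ^ m := by
    intro i hi
    rw [Finset.mem_filter] at hi
    rw [norm_smul, hv i hi.2, mul_one, Real.norm_eq_abs, abs_pow]
    calc |s i| ^ m ≤ ((M / (2 * ((n:ℝ) - 1))) ^ ((1 : ℝ) / m) * s 0) ^ m := by
          apply pow_le_pow_left₀ (abs_nonneg _) (hsi i hi.2)
      _ = M / (2 * ((n:ℝ) - 1)) * (s 0) ^ m := by rw [mul_pow, hcm]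
  have hcard : (Finset.univ.filter (· ≠ (0 : Fin n))).card = n - 1 := by
    rw [Finset.filter_ne', Finset.card_erase_of_mem (Finset.mem_univ _), Finset.card_univ,
      Fintype.card_fin]
  have hnorm : ‖∑ i ∈ Finset.univ.filter (· ≠ (0 : Fin n)), (s i) ^ m • v i‖
      ≤ M / 2 * (s 0) ^ m := by
    calc ‖∑ i ∈ Finset.univ.filter (· ≠ (0 : Fin n)), (s i) ^ m • v i‖
        ≤ ∑ i ∈ Finset.univ.filter (· ≠ (0 : Fin n)), ‖(s i) ^ m • v i‖ :=
          norm_sum_le _ _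
      _ ≤ ∑ _i ∈ Finset.univ.filter (· ≠ (0 : Fin n)),
            (M / (2 * ((n:ℝ) - 1)) * (s 0) ^ m) := Finset.sum_le_sum hterm
      _ = ((n:ℝ) - 1) * (M / (2 * ((n:ℝ) - 1)) * (s 0) ^ m) := by
          rw [Finset.sum_const, hcard, nsmul_eq_mul]
          congr 1
          have : (1:ℕ) ≤ n := le_trans (by norm_num) hn
          push_cast [Nat.cast_sub this]
          ring
      _ = M / 2 * (s 0) ^ m := by field_simp
  have hedist : edist (h (s 0)) (θ s) ≤ ENNReal.ofReal (M / 2 * (s 0) ^ m) := by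
    rw [edist_dist, dist_eq_norm, hθ]
    apply ENNReal.ofReal_le_ofReal
    simpa using hnorm
  have hkey : ENNReal.ofReal (M / 2 * (s 0) ^ m) ≤ EMetric.infEdist (θ s) Xᶜ := by
    have h1 := EMetric.infEdist_le_infEdist_add_edist (x := h (s 0)) (y := θ s) (s := Xᶜ)
    have h2 := hdist (s 0) ⟨hs0, hs1⟩
    have h3 : ENNReal.ofReal (M * (s 0) ^ m)
        ≤ EMetric.infEdist (θ s) Xᶜ + ENNReal.ofReal (M / 2 * (s 0) ^ m) :=
      le_trans h2 (le_trans h1 (add_le_add (le_refl _) hedist))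
    have h4 : ENNReal.ofReal (M * (s 0) ^ m)
        = ENNReal.ofReal (M / 2 * (s 0) ^ m) + ENNReal.ofReal (M / 2 * (s 0) ^ m) := by
      rw [← ENNReal.ofReal_add (by positivity) (by positivity)]
      ring_nf
    rw [h4] at h3
    exact (ENNReal.add_le_add_iff_right ENNReal.ofReal_ne_top).mp
      (by rwa [add_comm] at h3)
  refine ⟨?_, hkey⟩
  rcases eq_or_lt_of_le hs0 with h0' | h0'
  · have hzero : ∀ i ∈ Finset.univ.filter (· ≠ (0 : Fin n)), (s i) ^ m • v i = 0 := by
      intro i hi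
      rw [Finset.mem_filter] at hi
      have := hsi i hi.2
      rw [← h0', mul_zero] at this
      have : s i = 0 := abs_nonneg (s i) |>.antisymm' this |> abs_eq_zero.mp
      simp [this, zero_pow hm.ne']
    rw [hθ, Finset.sum_eq_zero hzero, add_zero, ← h0', h0]
    exact hx
  · by_contra hmem
    have : θ s ∈ Xᶜ := hmem
    have hz : EMetric.infEdist (θ s) Xᶜ = 0 := EMetric.infEdist_zero_of_mem this
    rw [hz] at hkey
    have : (0:ℝ) < M / 2 * (s 0) ^ m := by positivity
    simp [ENNReal.ofReal_eq_zero, not_lt.mpr (le_of_lt this)] at hkey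
    linarith
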